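/- Let k be a commutative ring, V a free k-module of finite rank, R = Sym(V*) viewed as a dg-algebra with trivial differential and generators in cohomological degree 2, and Λ the exterior algebra of V*. Let M be a dg-module over R with H^n(M) = 0 for all n < 0. Then the morphism of dg-k-modules M → Λ ⊗_k M, m ↦ 1 ⊗ m, induces an isomorphism H^0(M) ≅ H^0(Λ ⊗_k M), where Λ ⊗_k M carries the Koszul differential. -/

import Mathlib

/-!
# Statement 15

Let `k` be a commutative ring, `V` a free `k`-module of finite rank `m`, `R = Sym(V^*)`
regarded as a dg-algebra with trivial differential and generators in cohomological degree `2`,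
and `Λ` the exterior algebra of `V^*` (with `Λ^p` in cohomological degree `p`).  Let `M` be a
dg-module over `R` with `H^n(M) = 0` for `n < 0`.  Then the morphism of dg-`k`-modules
`M → Λ ⊗_k M`, `x ↦ 1 ⊗ x`, induces an isomorphism `H^0(M) ≅ H^0(Λ ⊗_k M)`, where `Λ ⊗_k M`
carries the Koszul differential.

A dg-module over `R = Sym(V^*)` (with trivial differential) is the same thing as a complex
`(M, d)` of `k`-modules together with `m` pairwise commuting degree-`2` endomorphisms
`θ_1, …, θ_m` commuting with `d` (the actions of a basis `e_1, …, e_m` of `V^*`).  We realize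
`M` as a `ℤ`-graded `k`-module `(Mt, gM)` and `Λ ⊗_k M` as the graded module
`Koszul := Finset (Fin m) → Mt`, the component at `s ⊆ {1,…,m}` being `e_s ⊗ M` (so the
degree-`n` part of `Λ ⊗ M` is `koszulGrading gM n`, whose component at `s` is `M^{n-|s|}`);
the Koszul differential is `koszulD d θ`, and the map `x ↦ 1 ⊗ x` is
`LinearMap.single _ _ ∅`.  The conclusion `H^0(M) ≅ H^0(Λ ⊗ M)` is unfolded into: the map
sends `0`-cocycles to `0`-cocycles and is injective and surjective on `H^0`.
-/

open Finset

variable {k : Type*} [CommRing k] {m : ℕ}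
variable {Mt : Type*} [AddCommGroup Mt] [Module k Mt]

/-- The underlying `k`-module of `Λ ⊗_k M` for a chosen basis `e_1, …, e_m` of `V^*`:
the component at `s ⊆ {1, …, m}` corresponds to `e_s ⊗ M`. -/
abbrev Koszul (k : Type*) (Mt : Type*) [CommRing k] [AddCommGroup Mt] [Module k Mt]
    (m : ℕ) : Type _ :=
  Finset (Fin m) → Mt

/-- The Koszul differential on `Λ ⊗_k M`:
`d(e_{j_1} ∧ ⋯ ∧ e_{j_p} ⊗ x) = ∑_i (−1)^{i−1} e_{j_1} ∧ ⋯ ∧ ê_{j_i} ∧ ⋯ ∧ e_{j_p} ⊗ θ_{j_i} x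
 + (−1)^p e_{j_1} ∧ ⋯ ∧ e_{j_p} ⊗ d x`. -/
def koszulD (d : Mt →ₗ[k] Mt) (θ : Fin m → (Mt →ₗ[k] Mt)) :
    Koszul k Mt m →ₗ[k] Koszul k Mt m where
  toFun f s :=
    (∑ j ∈ univ.filter (fun j : Fin m => j ∉ s),
        ((-1 : k) ^ (s.filter (fun i => i < j)).card) • θ j (f (insert j s)))
      + ((-1 : k) ^ s.card) • d (f s)
  map_add' f g := by
    funext s
    simp only [Pi.add_apply, map_add, smul_add, Finset.sum_add_distrib]
    abel
  map_smul' c f := by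
    funext s
    simp only [Pi.smul_apply, map_smul, RingHom.id_apply, smul_add, Finset.smul_sum,
      smul_smul, mul_comm c]

/-- The cohomological grading on `Λ ⊗_k M`: in degree `n`, the component at `s` is
`M^{n − |s|}`. -/
def koszulGrading (gM : ℤ → Submodule k Mt) (n : ℤ) : Submodule k (Koszul k Mt m) :=
  Submodule.pi Set.univ fun s : Finset (Fin m) => gM (n - s.card)


section Aux

variable (d : Mt →ₗ[k] Mt) (θ : Fin m → (Mt →ₗ[k] Mt))

lemma koszulD_apply (f : Koszul k Mt m) (s : Finset (Fin m)) :
    koszulD d θ f s =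
      (∑ j ∈ univ.filter (fun j : Fin m => j ∉ s),
        ((-1 : k) ^ (s.filter (fun i => i < j)).card) • θ j (f (insert j s)))
      + ((-1 : k) ^ s.card) • d (f s) := rfl

lemma mem_koszulGrading {gM : ℤ → Submodule k Mt} {n : ℤ} {f : Koszul k Mt m} :
    f ∈ koszulGrading gM n ↔ ∀ s : Finset (Fin m), f s ∈ gM (n - s.card) := by
  simp [koszulGrading, Submodule.mem_pi]

lemma sgn_aux (i j : Fin m) (s : Finset (Fin m)) (hj : j ∉ s) :
    ((insert j s).filter (fun x => x < i)).card
      = (s.filter (fun x => x < i)).card + (if j < i then 1 else 0) := by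
  rw [filter_insert]
  by_cases h : j < i
  · rw [if_pos h, if_pos h, card_insert_of_notMem (fun hmem => hj (mem_filter.mp hmem).1)]
  · rw [if_neg h, if_neg h, add_zero]

lemma sgn_cancel {i j : Fin m} (hij : i ≠ j) (s : Finset (Fin m)) (hi : i ∉ s) (hj : j ∉ s) :
    (-1 : k) ^ (s.filter (fun x => x < j)).card
        * (-1 : k) ^ (((insert j s).filter (fun x => x < i)).card)
      + (-1 : k) ^ (s.filter (fun x => x < i)).card
        * (-1 : k) ^ (((insert i s).filter (fun x => x < j)).card) = 0 := by
  rw [sgn_aux i j s hj, sgn_aux j i s hi]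
  rcases hij.lt_or_gt with h | h
  · rw [if_neg (asymm h), if_pos h]
    simp [pow_add]
    ring
  · rw [if_pos h, if_neg (asymm h)]
    simp [pow_add]
    ring

end Aux

section Sq
variable (d : Mt →ₗ[k] Mt) (θ : Fin m → (Mt →ₗ[k] Mt))

lemma koszulD_sq (hdd : ∀ x : Mt, d (d x) = 0)
    (hθd : ∀ (j : Fin m) (x : Mt), d (θ j x) = θ j (d x))
    (hθθ : ∀ (i j : Fin m) (x : Mt), θ i (θ j x) = θ j (θ i x))
    (f : Koszul k Mt m) : koszulD d θ (koszulD d θ f) = 0 := by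
  funext s
  rw [koszulD_apply]
  have step1 : ∀ j ∈ univ.filter (fun j : Fin m => j ∉ s),
      ((-1 : k) ^ (s.filter (fun i => i < j)).card) • θ j (koszulD d θ f (insert j s))
        = (∑ i ∈ univ.filter (fun i : Fin m => i ∉ insert j s),
            (((-1 : k) ^ (s.filter (fun x => x < j)).card)
              * ((-1 : k) ^ (((insert j s).filter (fun x => x < i)).card)))
              • θ j (θ i (f (insert i (insert j s)))))
          + (-(((-1 : k) ^ s.card) * ((-1 : k) ^ (s.filter (fun x => x < j)).card)))
              • θ j (d (f (insert j s))) := by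
    intro j hj
    have hjs : j ∉ s := (mem_filter.mp hj).2
    rw [koszulD_apply, map_add, map_sum, smul_add, Finset.smul_sum]
    congr 1
    · exact Finset.sum_congr rfl fun i _ => by rw [map_smul, smul_smul]
    · rw [map_smul, smul_smul, card_insert_of_notMem hjs, pow_succ]
      ring_nf
  rw [Finset.sum_congr rfl step1]
  have step2 : ((-1 : k) ^ s.card) • d (koszulD d θ f s)
      = ∑ j ∈ univ.filter (fun j : Fin m => j ∉ s),
          (((-1 : k) ^ s.card) * ((-1 : k) ^ (s.filter (fun x => x < j)).card))
            • θ j (d (f (insert j s))) := by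
    rw [koszulD_apply, map_add, map_sum, smul_add, Finset.smul_sum, map_smul, smul_smul,
      hdd, smul_zero, add_zero]
    exact Finset.sum_congr rfl fun j _ => by rw [map_smul, smul_smul, hθd]
  rw [step2, Finset.sum_add_distrib, add_assoc, ← Finset.sum_add_distrib]
  have cross : ∑ j ∈ univ.filter (fun j : Fin m => j ∉ s),
      ((-(((-1 : k) ^ s.card) * ((-1 : k) ^ (s.filter (fun x => x < j)).card)))
          • θ j (d (f (insert j s)))
        + (((-1 : k) ^ s.card) * ((-1 : k) ^ (s.filter (fun x => x < j)).card))
          • θ j (d (f (insert j s)))) = 0 := by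
    refine Finset.sum_eq_zero fun j _ => ?_
    rw [neg_smul, neg_add_cancel]
  rw [cross, add_zero]
  rw [Finset.sum_sigma']
  refine Finset.sum_involution (fun p _ => ⟨p.2, p.1⟩) ?_ ?_ ?_ ?_
  · rintro ⟨j, i⟩ hp
    simp only [Finset.mem_sigma, mem_filter, mem_univ, true_and, mem_insert, not_or] at hp
    obtain ⟨hjs, hij, his⟩ := hp
    have hne : i ≠ j := hij
    dsimp only
    rw [hθθ i j, Finset.insert_comm j i s, ← add_smul, sgn_cancel hne s his hjs, zero_smul]
  · rintro ⟨j, i⟩ hp hne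
    simp only [Finset.mem_sigma, mem_filter, mem_univ, true_and, mem_insert, not_or] at hp
    intro heq
    have h2 := congrArg Sigma.fst heq
    dsimp only at h2
    exact hp.2.1 h2
  · rintro ⟨j, i⟩ hp
    simp only [Finset.mem_sigma, mem_filter, mem_univ, true_and, mem_insert, not_or] at hp ⊢
    exact ⟨hp.2.2, fun h => hp.2.1 h.symm, hp.1⟩
  · rintro ⟨j, i⟩ _
    rfl

end Sq

section Red
variable (gM : ℤ → Submodule k Mt) (d : Mt →ₗ[k] Mt) (θ : Fin m → (Mt →ₗ[k] Mt))

lemma koszulD_mem (hd : ∀ n : ℤ, ∀ x ∈ gM n, d x ∈ gM (n + 1))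
    (hθdeg : ∀ (j : Fin m) (n : ℤ), ∀ x ∈ gM n, θ j x ∈ gM (n + 2))
    {n : ℤ} {f : Koszul k Mt m} (hf : f ∈ koszulGrading gM n) :
    koszulD d θ f ∈ koszulGrading gM (n + 1) := by
  rw [mem_koszulGrading] at hf ⊢
  intro s
  rw [koszulD_apply]
  refine Submodule.add_mem _ (Submodule.sum_mem _ fun j hj => Submodule.smul_mem _ _ ?_)
    (Submodule.smul_mem _ _ ?_)
  · have hjs : j ∉ s := (mem_filter.mp hj).2
    have h1 := hθdeg j _ _ (hf (insert j s))
    have he : n - ((insert j s).card : ℤ) + 2 = n + 1 - s.card := by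
      rw [card_insert_of_notMem hjs]; push_cast; ring
    rwa [he] at h1
  · have h1 := hd _ _ (hf s)
    have he : n - (s.card : ℤ) + 1 = n + 1 - s.card := by ring
    rwa [he] at h1

lemma koszul_reduce (hn0 : ∀ n : ℤ, (0 : Mt) ∈ gM n)
    (hd : ∀ n : ℤ, ∀ x ∈ gM n, d x ∈ gM (n + 1))
    (hdd : ∀ x : Mt, d (d x) = 0)
    (hθdeg : ∀ (j : Fin m) (n : ℤ), ∀ x ∈ gM n, θ j x ∈ gM (n + 2))
    (hθd : ∀ (j : Fin m) (x : Mt), d (θ j x) = θ j (d x))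
    (hθθ : ∀ (i j : Fin m) (x : Mt), θ i (θ j x) = θ j (θ i x))
    (hneg : ∀ n : ℤ, n < 0 → ∀ x ∈ gM n, d x = 0 → ∃ y ∈ gM (n - 1), d y = x)
    (n : ℤ) (hn : n ≤ 0) :
    ∀ p : ℕ, ∀ f : Koszul k Mt m, f ∈ koszulGrading gM n →
      (∀ s : Finset (Fin m), s ≠ ∅ → koszulD d θ f s = 0) →
      (∀ s : Finset (Fin m), p < s.card → f s = 0) →
      ∃ h ∈ koszulGrading gM (n - 1), ∀ s : Finset (Fin m), s ≠ ∅ →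
        (f - koszulD d θ h) s = 0 := by
  intro p
  induction p with
  | zero =>
    intro f hf hDf hvan
    refine ⟨0, Submodule.zero_mem _, fun s hs => ?_⟩
    rw [map_zero, sub_zero]
    exact hvan s (Finset.card_pos.mpr (Finset.nonempty_iff_ne_empty.mpr hs))
  | succ p ih =>
    intro f hf hDf hvan
    -- the top components are cocycles of negative degree, hence boundaries
    have key : ∀ s : Finset (Fin m), ∃ y, y ∈ gM (n - 1 - s.card) ∧
        (s.card = p + 1 → d y = f s) := by
      intro s
      by_cases hc : s.card = p + 1
      · have hsne : s ≠ ∅ := by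
          intro h; rw [h] at hc; simp at hc
        have hDfs := hDf s hsne
        rw [koszulD_apply] at hDfs
        have hsum : (∑ j ∈ univ.filter (fun j : Fin m => j ∉ s),
            ((-1 : k) ^ (s.filter (fun i => i < j)).card) • θ j (f (insert j s))) = 0 := by
          refine Finset.sum_eq_zero fun j hj => ?_
          have hjs : j ∉ s := (mem_filter.mp hj).2
          rw [hvan (insert j s) (by rw [card_insert_of_notMem hjs, hc]; omega), map_zero,
            smul_zero]
        rw [hsum, zero_add] at hDfs
        have hdfs : d (f s) = 0 := by
          have := congrArg (fun z => ((-1 : k) ^ s.card) • z) hDfs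
          rwa [smul_smul, ← pow_add, Even.neg_one_pow ⟨s.card, by ring⟩, one_smul,
            smul_zero] at this
        have hmem : f s ∈ gM (n - s.card) := (mem_koszulGrading.mp hf) s
        have hlt : (n : ℤ) - s.card < 0 := by
          rw [hc]; push_cast; omega
        obtain ⟨y, hy, hdy⟩ := hneg _ hlt _ hmem hdfs
        refine ⟨y, ?_, fun _ => hdy⟩
        have he : n - (s.card : ℤ) - 1 = n - 1 - s.card := by ring
        rwa [he] at hy
      · exact ⟨0, hn0 _, fun h => absurd h hc⟩
    choose y hy hdy using key
    set h₁ : Koszul k Mt m := fun s =>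
      if s.card = p + 1 then ((-1 : k) ^ (p + 1)) • y s else 0 with hh₁
    have hh₁mem : h₁ ∈ koszulGrading gM (n - 1) := by
      rw [mem_koszulGrading]
      intro s
      rw [hh₁]
      dsimp only
      split
      · exact Submodule.smul_mem _ _ (hy s)
      · exact hn0 _
    have hDh₁ : ∀ s : Finset (Fin m), p < s.card → koszulD d θ h₁ s = f s := by
      intro s hs
      rw [koszulD_apply]
      have hsum : (∑ j ∈ univ.filter (fun j : Fin m => j ∉ s),
          ((-1 : k) ^ (s.filter (fun i => i < j)).card) • θ j (h₁ (insert j s))) = 0 := by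
        refine Finset.sum_eq_zero fun j hj => ?_
        have hjs : j ∉ s := (mem_filter.mp hj).2
        have : h₁ (insert j s) = 0 := by
          rw [hh₁]; dsimp only
          rw [if_neg (by rw [card_insert_of_notMem hjs]; omega)]
        rw [this, map_zero, smul_zero]
      rw [hsum, zero_add]
      by_cases hc : s.card = p + 1
      · have : h₁ s = ((-1 : k) ^ (p + 1)) • y s := by rw [hh₁]; dsimp only; rw [if_pos hc]
        rw [this, map_smul, smul_smul, hc, ← pow_add,
          Even.neg_one_pow ⟨p + 1, by ring⟩, one_smul, hdy s hc]
      · have : h₁ s = 0 := by rw [hh₁]; dsimp only; rw [if_neg hc]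
        rw [this, map_zero, smul_zero]
        exact (hvan s (by omega)).symm
    -- apply the inductive hypothesis to f - D h₁
    have hf' : f - koszulD d θ h₁ ∈ koszulGrading gM n := by
      have := koszulD_mem gM d θ hd hθdeg hh₁mem
      rw [sub_add_cancel] at this
      exact Submodule.sub_mem _ hf this
    have hDf' : ∀ s : Finset (Fin m), s ≠ ∅ → koszulD d θ (f - koszulD d θ h₁) s = 0 := by
      intro s hs
      rw [map_sub, koszulD_sq d θ hdd hθd hθθ, sub_zero]
      exact hDf s hs
    have hvan' : ∀ s : Finset (Fin m), p < s.card → (f - koszulD d θ h₁) s = 0 := by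
      intro s hs
      rw [Pi.sub_apply, hDh₁ s hs, sub_self]
    obtain ⟨h₂, hh₂mem, hh₂⟩ := ih (f - koszulD d θ h₁) hf' hDf' hvan'
    refine ⟨h₁ + h₂, Submodule.add_mem _ hh₁mem hh₂mem, fun s hs => ?_⟩
    have h3 := hh₂ s hs
    rw [Pi.sub_apply, Pi.sub_apply] at h3
    rw [map_add, Pi.sub_apply, Pi.add_apply, ← sub_sub]
    exact h3

end Red

theorem koszul_resolution_H0
    -- `M` is a `ℤ`-graded `k`-module …
    (gM : ℤ → Submodule k Mt)
    (hinternal : DirectSum.IsInternal fun n : ℤ => gM n)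
    -- … with a degree-`1` differential `d` squaring to zero …
    (d : Mt →ₗ[k] Mt)
    (hd : ∀ n : ℤ, ∀ x ∈ gM n, d x ∈ gM (n + 1))
    (hdd : ∀ x : Mt, d (d x) = 0)
    -- … and a dg-action of `R = Sym(V^*)`: pairwise commuting degree-`2` operators
    -- `θ_1, …, θ_m` (the actions of a basis of `V^*`) commuting with `d`
    (θ : Fin m → (Mt →ₗ[k] Mt))
    (hθdeg : ∀ (j : Fin m) (n : ℤ), ∀ x ∈ gM n, θ j x ∈ gM (n + 2))
    (hθd : ∀ (j : Fin m) (x : Mt), d (θ j x) = θ j (d x))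
    (hθθ : ∀ (i j : Fin m) (x : Mt), θ i (θ j x) = θ j (θ i x))
    -- `H^n(M) = 0` for all `n < 0`
    (hneg : ∀ n : ℤ, n < 0 → ∀ x ∈ gM n, d x = 0 → ∃ y ∈ gM (n - 1), d y = x) :
    -- conclusion: `x ↦ 1 ⊗ x` induces an isomorphism `H^0(M) ≅ H^0(Λ ⊗_k M)`:
    -- (a) it sends `0`-cocycles of `M` to `0`-cocycles of `Λ ⊗ M`;
    (∀ x : Mt, x ∈ gM 0 → d x = 0 →
      LinearMap.single k (fun _ : Finset (Fin m) => Mt) ∅ x ∈ (koszulGrading gM 0 : Submodule k (Koszul k Mt m)) ∧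
      koszulD d θ (LinearMap.single k (fun _ : Finset (Fin m) => Mt) ∅ x) = 0) ∧
    -- (b) it is injective on `H^0`;
    (∀ x : Mt, x ∈ gM 0 → d x = 0 →
      (∃ g ∈ (koszulGrading gM (-1) : Submodule k (Koszul k Mt m)),
        koszulD d θ g = LinearMap.single k (fun _ : Finset (Fin m) => Mt) ∅ x) →
      ∃ y ∈ gM (-1), d y = x) ∧
    -- (c) it is surjective on `H^0`.
    (∀ f : Koszul k Mt m, f ∈ koszulGrading gM 0 → koszulD d θ f = 0 →
      ∃ x ∈ gM 0, d x = 0 ∧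
        ∃ g ∈ (koszulGrading gM (-1) : Submodule k (Koszul k Mt m)),
          koszulD d θ g = f - LinearMap.single k (fun _ : Finset (Fin m) => Mt) ∅ x) := by
  have hsingle : ∀ x : Mt, ∀ s : Finset (Fin m),
      (LinearMap.single k (fun _ : Finset (Fin m) => Mt) ∅ x) s
        = if s = ∅ then x else 0 := by
    intro x s
    simp [LinearMap.single_apply, Pi.single_apply]
  have hcard : ∀ s : Finset (Fin m), ¬ (m < s.card) := by
    intro s hs
    have := Finset.card_le_univ s
    simp [Finset.card_fin] at this
    omega
  refine ⟨?_, ?_, ?_⟩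
  · -- (a)
    intro x hx hdx
    constructor
    · rw [mem_koszulGrading]
      intro s
      rw [hsingle]
      split
      · next h => subst h; simpa using hx
      · exact Submodule.zero_mem _
    · funext s
      rw [koszulD_apply]
      have hsum : (∑ j ∈ univ.filter (fun j : Fin m => j ∉ s),
          ((-1 : k) ^ (s.filter (fun i => i < j)).card)
            • θ j ((LinearMap.single k (fun _ : Finset (Fin m) => Mt) ∅ x) (insert j s))) = 0 := by
        refine Finset.sum_eq_zero fun j _ => ?_
        rw [hsingle, if_neg (Finset.insert_ne_empty j s), map_zero, smul_zero]
      rw [hsum, zero_add, hsingle]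
      split
      · rw [hdx, smul_zero]; rfl
      · rw [map_zero, smul_zero]; rfl
  · -- (b)
    rintro x hx hdx ⟨g, hg, hDg⟩
    obtain ⟨h, hhmem, hh⟩ := koszul_reduce gM d θ (fun _ => Submodule.zero_mem _) hd hdd
      hθdeg hθd hθθ hneg (-1) (by norm_num) m g hg
      (fun s hs => by rw [hDg, hsingle, if_neg hs])
      (fun s hs => absurd hs (hcard s))
    have hg'mem : g - koszulD d θ h ∈ koszulGrading gM (-1) := by
      have := koszulD_mem gM d θ hd hθdeg hhmem
      rw [show (-1 : ℤ) - 1 + 1 = -1 by ring] at this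
      exact Submodule.sub_mem _ hg this
    refine ⟨(g - koszulD d θ h) ∅, ?_, ?_⟩
    · have := mem_koszulGrading.mp hg'mem ∅
      simpa using this
    · have hDg' : koszulD d θ (g - koszulD d θ h) ∅ = x := by
        rw [map_sub, koszulD_sq d θ hdd hθd hθθ, sub_zero, hDg, hsingle, if_pos rfl]
      rw [koszulD_apply] at hDg'
      have hsum : (∑ j ∈ univ.filter (fun j : Fin m => j ∉ (∅ : Finset (Fin m))),
          ((-1 : k) ^ ((∅ : Finset (Fin m)).filter (fun i => i < j)).card)
            • θ j ((g - koszulD d θ h) (insert j ∅))) = 0 := by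
        refine Finset.sum_eq_zero fun j _ => ?_
        rw [hh _ (Finset.insert_ne_empty j ∅), map_zero, smul_zero]
      rw [hsum, zero_add] at hDg'
      simpa using hDg'
  · -- (c)
    intro f hf hDf0
    obtain ⟨h, hhmem, hh⟩ := koszul_reduce gM d θ (fun _ => Submodule.zero_mem _) hd hdd
      hθdeg hθd hθθ hneg 0 le_rfl m f hf
      (fun s _ => by rw [hDf0]; rfl)
      (fun s hs => absurd hs (hcard s))
    have hf'mem : f - koszulD d θ h ∈ koszulGrading gM 0 := by
      have := koszulD_mem gM d θ hd hθdeg hhmem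
      rw [show (0 : ℤ) - 1 + 1 = 0 by ring] at this
      exact Submodule.sub_mem _ hf this
    refine ⟨(f - koszulD d θ h) ∅, ?_, ?_, h, hhmem, ?_⟩
    · have := mem_koszulGrading.mp hf'mem ∅
      simpa using this
    · have hDf' : koszulD d θ (f - koszulD d θ h) ∅ = 0 := by
        rw [map_sub, koszulD_sq d θ hdd hθd hθθ, sub_zero, hDf0]; rfl
      rw [koszulD_apply] at hDf'
      have hsum : (∑ j ∈ univ.filter (fun j : Fin m => j ∉ (∅ : Finset (Fin m))),
          ((-1 : k) ^ ((∅ : Finset (Fin m)).filter (fun i => i < j)).card)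
            • θ j ((f - koszulD d θ h) (insert j ∅))) = 0 := by
        refine Finset.sum_eq_zero fun j _ => ?_
        rw [hh _ (Finset.insert_ne_empty j ∅), map_zero, smul_zero]
      rw [hsum, zero_add] at hDf'
      simpa using hDf'
    · funext s
      rw [Pi.sub_apply, hsingle]
      split
      · next hse =>
        subst hse
        rw [Pi.sub_apply]
        abel
      · next hse =>
        rw [sub_zero]
        have h2 := hh s hse
        rw [Pi.sub_apply] at h2
        exact (sub_eq_zero.mp h2).symm
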